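/- Let B be a finite candidate set of nodes, let k' be the number of nodes already verified to be in the top-k (so that k − k' nodes remain to be selected from B, with 1 ≤ k − k' < |B|), let p : B → [0,1], and let ε, δ ∈ (0,1). On a probability space, let X_1, …, X_t be independent, identically distributed measurable maps from Ω to [0,1]^B with E[X_i(v)] = p(v) for every v ∈ B and every i, and define p̂(v) = (1/t)·Σ_{i=1}^t X_i(v). If t ≥ (2/ε²)·ln((k−k')·(|B|−(k−k'))/δ), then with probability at least 1 − δ: every subset R ⊆ B with |R| = k − k' satisfying p̂(u) ≥ p̂(w) for all u ∈ R and w ∈ B \ R satisfies (1) p(v) ≥ Q − ε for all v ∈ R, and (2) p(v) < Q + ε for all v ∈ B \ R, where Q is the (k−k')-th largest value of p over B. -/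

import Mathlib

open MeasureTheory ProbabilityTheory

/-- The `j`-th largest value attained by `f` on the finite type `B`
(the `j`-th entry, 1-indexed, of the list of values of `f` sorted in
non-increasing order). -/
noncomputable def kthLargest {B : Type*} [Fintype B] (f : B → ℝ) (j : ℕ) : ℝ :=
  ((Finset.univ.val.map f).sort (· ≥ ·)).getD (j - 1) 0

open scoped ENNReal

lemma auxCosh {x : ℝ} (hx : 0 ≤ x) :
    Real.cosh x - x * Real.sinh x ≤ Real.exp (-(x ^ 2) / 2) := by
  set g : ℝ → ℝ := fun y => Real.exp (y ^ 2 / 2) * (Real.cosh y - y * Real.sinh y) with hg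
  have hd : ∀ y : ℝ, HasDerivAt g
      (Real.exp (y ^ 2 / 2) * y * (Real.cosh y - y * Real.sinh y) +
        Real.exp (y ^ 2 / 2) * (Real.sinh y - (1 * Real.sinh y + y * Real.cosh y))) y := by
    intro y
    have h1 : HasDerivAt (fun z : ℝ => z ^ 2 / 2) y y := by
      have := (hasDerivAt_pow 2 y).div_const 2
      simpa using this
    have h2 : HasDerivAt (fun z : ℝ => Real.exp (z ^ 2 / 2)) (Real.exp (y ^ 2 / 2) * y) y :=
      h1.exp
    have h3 : HasDerivAt Real.cosh (Real.sinh y) y := Real.hasDerivAt_cosh y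
    have h4 : HasDerivAt (fun z : ℝ => z * Real.sinh z)
        (1 * Real.sinh y + y * Real.cosh y) y :=
      (hasDerivAt_id y).mul (Real.hasDerivAt_sinh y)
    have := h2.mul (h3.sub h4)
    convert this using 1
    all_goals rfl
  have hanti : AntitoneOn g (Set.Ici (0 : ℝ)) := by
    apply antitoneOn_of_deriv_nonpos (convex_Ici 0)
    · exact (Continuous.mul (by continuity) (by continuity)).continuousOn
    · intro y hy
      exact (hd y).differentiableAt.differentiableWithinAt
    · intro y hy
      rw [interior_Ici] at hy
      rw [(hd y).deriv]
      have hy0 : 0 < y := hy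
      have hs : 0 ≤ Real.sinh y := Real.sinh_nonneg_iff.mpr hy0.le
      have he : 0 < Real.exp (y ^ 2 / 2) := Real.exp_pos _
      have : Real.exp (y ^ 2 / 2) * y * (Real.cosh y - y * Real.sinh y) +
          Real.exp (y ^ 2 / 2) * (Real.sinh y - (1 * Real.sinh y + y * Real.cosh y))
          = -(Real.exp (y ^ 2 / 2) * y ^ 2 * Real.sinh y) := by ring
      rw [this]
      exact neg_nonpos.mpr (by positivity)
  have h1 : g x ≤ g 0 := hanti (Set.self_mem_Ici) (Set.mem_Ici.mpr hx) hx
  have h0 : g 0 = 1 := by simp [hg]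
  rw [h0] at h1
  have hepos : 0 < Real.exp (x ^ 2 / 2) := Real.exp_pos _
  have : Real.cosh x - x * Real.sinh x ≤ 1 / Real.exp (x ^ 2 / 2) := by
    rw [le_div_iff₀ hepos]
    calc (Real.cosh x - x * Real.sinh x) * Real.exp (x ^ 2 / 2)
        = g x := by rw [hg]; ring
      _ ≤ 1 := h1
  calc Real.cosh x - x * Real.sinh x ≤ 1 / Real.exp (x ^ 2 / 2) := this
    _ = Real.exp (-(x ^ 2) / 2) := by
        rw [one_div, ← Real.exp_neg]; ring_nf


lemma auxMgf {Ω : Type*} [MeasurableSpace Ω] {μ : Measure Ω} [IsProbabilityMeasure μ]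
    {Y : Ω → ℝ} (hY : Measurable Y) (hb : ∀ᵐ ω ∂μ, Y ω ∈ Set.Icc (-1 : ℝ) 1)
    {s : ℝ} (hs : 0 ≤ s) :
    ∫ ω, Real.exp (s * Y ω) ∂μ ≤ Real.cosh s + (∫ ω, Y ω ∂μ) * Real.sinh s := by
  have intY : Integrable Y μ := by
    refine Integrable.mono' (integrable_const (1 : ℝ)) hY.aestronglyMeasurable ?_
    filter_upwards [hb] with ω h
    rw [Real.norm_eq_abs]
    exact abs_le.mpr ⟨h.1, h.2⟩
  have intExp : Integrable (fun ω => Real.exp (s * Y ω)) μ := by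
    refine Integrable.mono' (integrable_const (Real.exp s)) ((hY.const_mul s).exp).aestronglyMeasurable ?_
    filter_upwards [hb] with ω h
    rw [Real.norm_eq_abs, Real.abs_exp]
    exact Real.exp_le_exp.mpr (by nlinarith [h.2])
  have intRHS : Integrable (fun ω => Real.cosh s + Y ω * Real.sinh s) μ :=
    (integrable_const _).add (intY.mul_const _)
  have hpt : ∀ᵐ ω ∂μ, Real.exp (s * Y ω) ≤ Real.cosh s + Y ω * Real.sinh s := by
    filter_upwards [hb] with ω h
    set y := Y ω
    have ha : (0 : ℝ) ≤ (1 - y) / 2 := by linarith [h.2]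
    have hb' : (0 : ℝ) ≤ (1 + y) / 2 := by linarith [h.1]
    have hab : (1 - y) / 2 + (1 + y) / 2 = 1 := by ring
    have hc := convexOn_exp.2 (Set.mem_univ (-s)) (Set.mem_univ s) ha hb' hab
    simp only [smul_eq_mul] at hc
    have h1 : (1 - y) / 2 * (-s) + (1 + y) / 2 * s = s * y := by ring
    rw [h1] at hc
    calc Real.exp (s * y) ≤ (1 - y) / 2 * Real.exp (-s) + (1 + y) / 2 * Real.exp s := hc
      _ = Real.cosh s + y * Real.sinh s := by rw [Real.cosh_eq, Real.sinh_eq]; ring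
  calc ∫ ω, Real.exp (s * Y ω) ∂μ ≤ ∫ ω, (Real.cosh s + Y ω * Real.sinh s) ∂μ :=
        integral_mono_ae intExp intRHS hpt
    _ = Real.cosh s + (∫ ω, Y ω ∂μ) * Real.sinh s := by
        rw [integral_add (integrable_const _) (intY.mul_const _), integral_const,
          integral_mul_const]
        simp

lemma auxHoeffding {Ω : Type*} [MeasurableSpace Ω] {μ : Measure Ω} [IsProbabilityMeasure μ]
    {t : ℕ} {Y : Fin t → Ω → ℝ} (hmeas : ∀ i, Measurable (Y i))
    (hind : iIndepFun Y μ)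
    (hb : ∀ i, ∀ᵐ ω ∂μ, Y i ω ∈ Set.Icc (-1 : ℝ) 1)
    {ε : ℝ} (hε0 : 0 < ε) (hε1 : ε ≤ 1)
    (hm : ∀ i, ∫ ω, Y i ω ∂μ ≤ -ε) :
    (μ {ω | 0 ≤ ∑ i, Y i ω}).toReal ≤ Real.exp (-((t : ℝ) * ε ^ 2) / 2) := by
  have hset : {ω | 0 ≤ ∑ i, Y i ω} = {ω | (0 : ℝ) ≤ (∑ i, Y i) ω} := by
    ext ω; simp [Finset.sum_apply]
  have intExpSum : Integrable (fun ω => Real.exp (ε * (∑ i, Y i) ω)) μ := by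
    refine Integrable.mono' (integrable_const (Real.exp (ε * t)))
      ?_ ?_
    · have hsm : Measurable (∑ i, Y i) := by
        have : Measurable fun ω => ∑ i, Y i ω :=
          Finset.measurable_sum Finset.univ (fun i _ => hmeas i)
        have heq : (∑ i, Y i) = fun ω => ∑ i, Y i ω := by ext ω; simp
        rw [heq]; exact this
      exact ((hsm.const_mul ε).exp).aestronglyMeasurable
    · have hball : ∀ᵐ ω ∂μ, ∀ i, Y i ω ∈ Set.Icc (-1 : ℝ) 1 := ae_all_iff.mpr hb
      filter_upwards [hball] with ω h
      rw [Real.norm_eq_abs, Real.abs_exp]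
      apply Real.exp_le_exp.mpr
      have : (∑ i, Y i) ω ≤ (t : ℝ) := by
        rw [Finset.sum_apply]
        calc ∑ i, Y i ω ≤ ∑ _i : Fin t, (1 : ℝ) := Finset.sum_le_sum fun i _ => (h i).2
          _ = (t : ℝ) := by simp
      nlinarith
  have chern := measure_ge_le_exp_mul_mgf (X := ∑ i, Y i) (μ := μ) 0 hε0.le intExpSum
  rw [hset]
  have hsinh : 0 ≤ Real.sinh ε := Real.sinh_nonneg_iff.mpr hε0.le
  have hbase0 : 0 ≤ Real.cosh ε - ε * Real.sinh ε := by
    have h1 : Real.sinh ε ≤ Real.cosh ε := by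
      rw [Real.cosh_eq, Real.sinh_eq]
      have := Real.exp_pos (-ε)
      linarith
    nlinarith
  calc (μ {ω | (0:ℝ) ≤ (∑ i, Y i) ω}).toReal
      ≤ Real.exp (-ε * 0) * mgf (∑ i, Y i) μ ε := chern
    _ = mgf (∑ i, Y i) μ ε := by simp
    _ = ∏ i, mgf (Y i) μ ε := hind.mgf_sum hmeas Finset.univ
    _ ≤ ∏ _i : Fin t, (Real.cosh ε - ε * Real.sinh ε) := by
        refine Finset.prod_le_prod (fun i _ => mgf_nonneg) (fun i _ => ?_)
        calc mgf (Y i) μ ε = ∫ ω, Real.exp (ε * Y i ω) ∂μ := rfl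
          _ ≤ Real.cosh ε + (∫ ω, Y i ω ∂μ) * Real.sinh ε := auxMgf (hmeas i) (hb i) hε0.le
          _ ≤ Real.cosh ε - ε * Real.sinh ε := by nlinarith [hm i]
    _ = (Real.cosh ε - ε * Real.sinh ε) ^ t := by simp
    _ ≤ (Real.exp (-(ε ^ 2) / 2)) ^ t := pow_le_pow_left₀ hbase0 (auxCosh hε0.le) t
    _ = Real.exp (-((t : ℝ) * ε ^ 2) / 2) := by
        rw [← Real.exp_nat_mul]; ring_nf



lemma auxTop {B : Type*} [Fintype B] [DecidableEq B] (p : B → ℝ) {m : ℕ}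
    (hm1 : 1 ≤ m) (hmn : m ≤ Fintype.card B) :
    ∃ T : Finset B, T.card = m ∧ (∀ w ∈ T, kthLargest p m ≤ p w) ∧
      ∀ u ∉ T, p u ≤ kthLargest p m := by
  classical
  set s : List ℝ := ((Finset.univ.val.map p).sort (· ≥ ·)) with hs
  have hlen : s.length = Fintype.card B := by
    rw [hs, Multiset.length_sort]; simp
  have hsort : s.Pairwise (· ≥ ·) := Multiset.pairwise_sort _ _
  have hidx : m - 1 < s.length := by omega
  set Q := kthLargest p m with hQdef
  have hQ : Q = s.get ⟨m - 1, hidx⟩ := by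
    rw [hQdef, kthLargest, ← hs]
    exact List.getD_eq_getElem _ _ hidx
  have hrel : ∀ (i j : Fin s.length), i ≤ j → s.get j ≤ s.get i := by
    intro i j hij
    exact hsort.rel_get_of_le hij
  have hcoe : (Finset.univ.val.map p) = (↑s : Multiset ℝ) := (Multiset.sort_eq _ _).symm
  -- counting
  have hcount1 : ∀ q : ℝ → Prop, [DecidablePred q] →
      (Finset.univ.filter (fun v => q (p v))).card = Multiset.countP q (↑s : Multiset ℝ) := by
    intro q _
    rw [← hcoe, Multiset.countP_map]
    rfl
  have hsplit1 : ((s.take m : List ℝ) : Multiset ℝ) + ((s.drop m : List ℝ) : Multiset ℝ)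
      = (↑s : Multiset ℝ) := by
    have := congrArg (fun l : List ℝ => (↑l : Multiset ℝ)) (List.take_append_drop m s)
    simpa using this
  have hmn' : m ≤ s.length := by omega
  -- card ≥ m for filter (Q ≤ p ·)
  have hge : m ≤ (Finset.univ.filter (fun v => Q ≤ p v)).card := by
    rw [hcount1 (fun x => Q ≤ x)]
    rw [← hsplit1, Multiset.countP_add]
    have : Multiset.countP (fun x => Q ≤ x) ((s.take m : List ℝ) : Multiset ℝ) = m := by
      rw [Multiset.countP_eq_card.mpr, Multiset.coe_card, List.length_take]
      · omega
      · intro a ha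
        rw [Multiset.mem_coe] at ha
        obtain ⟨i, hi, rfl⟩ := List.mem_iff_get.mp ha
        have hlt : (i : ℕ) < m := lt_of_lt_of_le i.isLt (List.length_take_le _ _)
        have hle : (i : ℕ) ≤ m - 1 := by omega
        have : s.get ⟨m - 1, hidx⟩ ≤ s.get ⟨i, by omega⟩ :=
          hrel ⟨i, by omega⟩ ⟨m - 1, hidx⟩ hle
        rw [hQ]
        calc s.get ⟨m - 1, hidx⟩ ≤ s.get ⟨i, by omega⟩ := this
          _ = (s.take m).get i := by
              rw [List.get_eq_getElem, List.get_eq_getElem, List.getElem_take]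
    omega
  -- card ≤ m - 1 for filter (Q < p ·)
  have hlt : (Finset.univ.filter (fun v => Q < p v)).card ≤ m - 1 := by
    rw [hcount1 (fun x => Q < x)]
    have hsplit2 : ((s.take (m-1) : List ℝ) : Multiset ℝ) + ((s.drop (m-1) : List ℝ) : Multiset ℝ)
        = (↑s : Multiset ℝ) := by
      have := congrArg (fun l : List ℝ => (↑l : Multiset ℝ)) (List.take_append_drop (m-1) s)
      simpa using this
    rw [← hsplit2, Multiset.countP_add]
    have h0 : Multiset.countP (fun x => Q < x) ((s.drop (m-1) : List ℝ) : Multiset ℝ) = 0 := by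
      rw [Multiset.countP_eq_zero]
      intro a ha
      rw [Multiset.mem_coe] at ha
      obtain ⟨i, hi, rfl⟩ := List.mem_iff_get.mp ha
      have hlen2 : (s.drop (m-1)).length = s.length - (m-1) := List.length_drop
      have hidx2 : m - 1 + (i : ℕ) < s.length := by
        have := i.isLt; omega
      have heq : (s.drop (m-1)).get i = s.get ⟨m - 1 + i, hidx2⟩ := by
        rw [List.get_eq_getElem, List.get_eq_getElem, List.getElem_drop]
      rw [heq, hQ]
      have : s.get ⟨m - 1 + i, hidx2⟩ ≤ s.get ⟨m - 1, hidx⟩ :=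
        hrel ⟨m - 1, hidx⟩ ⟨m - 1 + i, hidx2⟩ (by simp)
      exact not_lt.mpr this
    rw [h0, add_zero]
    calc Multiset.countP (fun x => Q < x) ((s.take (m-1) : List ℝ) : Multiset ℝ)
        ≤ Multiset.card ((s.take (m-1) : List ℝ) : Multiset ℝ) := Multiset.countP_le_card _ _
      _ ≤ m - 1 := by rw [Multiset.coe_card, List.length_take]; omega
  -- intermediate set
  have hsub : Finset.univ.filter (fun v => Q < p v) ⊆ Finset.univ.filter (fun v => Q ≤ p v) := by
    intro v hv
    simp only [Finset.mem_filter] at hv ⊢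
    exact ⟨hv.1, le_of_lt hv.2⟩
  obtain ⟨T, hT1, hT2, hTcard⟩ :=
    Finset.exists_subsuperset_card_eq hsub (by omega) hge
  refine ⟨T, hTcard, ?_, ?_⟩
  · intro w hw
    have := hT2 hw
    simpa using (Finset.mem_filter.mp this).2
  · intro u hu
    by_contra hc
    push_neg at hc
    exact hu (hT1 (Finset.mem_filter.mpr ⟨Finset.mem_univ u, hc⟩))

/-- Theorem 5 of the paper: after pruning verifies `k'` nodes and reduces the
candidate set to `B`, the reverse sampling algorithm selecting the remaining
`k - k'` nodes from `B` by largest estimated value is an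
`(ε, δ)`-approximation with sample size `t ≥ (2/ε²)·ln((k-k')(|B|-k+k')/δ)`. -/
theorem stmt5
    {B : Type*} [Fintype B] [DecidableEq B]
    {Ω : Type*} [MeasureSpace Ω] [IsProbabilityMeasure (ℙ : Measure Ω)]
    (k k' : ℕ) (hk' : k' < k) (hkB : k - k' < Fintype.card B)
    (p : B → ℝ) (hp : ∀ v, p v ∈ Set.Icc (0 : ℝ) 1)
    (ε δ : ℝ) (hε : ε ∈ Set.Ioo (0 : ℝ) 1) (hδ : δ ∈ Set.Ioo (0 : ℝ) 1)
    (t : ℕ) (X : Fin t → Ω → B → ℝ)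
    (hmeas : ∀ i, Measurable (X i))
    (hindep : iIndepFun X ℙ)
    (hident : ∀ i j, IdentDistrib (X i) (X j) ℙ ℙ)
    (hrange : ∀ i, ∀ᵐ ω ∂ℙ, ∀ v, X i ω v ∈ Set.Icc (0 : ℝ) 1)
    (hmean : ∀ i v, ∫ ω, X i ω v ∂ℙ = p v)
    (ht : (2 / ε ^ 2) *
        Real.log (((k : ℝ) - (k' : ℝ)) *
          ((Fintype.card B : ℝ) - ((k : ℝ) - (k' : ℝ))) / δ) ≤ (t : ℝ)) :
    1 - δ ≤ (ℙ {ω | ∀ R : Finset B, R.card = k - k' →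
        (∀ u ∈ R, ∀ w ∉ R,
          (∑ i, X i ω w) / (t : ℝ) ≤ (∑ i, X i ω u) / (t : ℝ)) →
        (∀ v ∈ R, kthLargest p (k - k') - ε ≤ p v) ∧
        (∀ v ∉ R, p v < kthLargest p (k - k') + ε)}).toReal := by
  classical
  obtain ⟨hε0, hε1⟩ := hε
  obtain ⟨hδ0, hδ1⟩ := hδ
  set m : ℕ := k - k' with hm
  set n : ℕ := Fintype.card B with hn
  have hm1 : 1 ≤ m := by omega
  have hmn : m < n := hkB
  set Q : ℝ := kthLargest p m with hQdef
  obtain ⟨T, hTcard, hTge, hTle⟩ := auxTop p hm1 hmn.le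
  set M : ℕ := m * (n - m) with hM
  have hM1 : 1 ≤ M := by
    have : 1 ≤ n - m := by omega
    calc 1 = 1 * 1 := by ring
      _ ≤ m * (n - m) := Nat.mul_le_mul hm1 this
  have hMcast : ((M : ℕ) : ℝ) = ((k : ℝ) - (k' : ℝ)) * ((n : ℝ) - ((k : ℝ) - (k' : ℝ))) := by
    have h1 : ((m : ℕ) : ℝ) = (k : ℝ) - (k' : ℝ) := by
      rw [hm]; push_cast [Nat.cast_sub hk'.le]; ring
    have h2 : (((n - m : ℕ)) : ℝ) = (n : ℝ) - ((k : ℝ) - (k' : ℝ)) := by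
      rw [Nat.cast_sub hmn.le, h1]
    rw [hM, Nat.cast_mul, h1, h2]
  -- the key numeric bound
  have hexpkey : (M : ℝ) * Real.exp (-((t : ℝ) * ε ^ 2) / 2) ≤ δ := by
    have hε2 : (0:ℝ) < ε ^ 2 := by positivity
    have hMpos : (0:ℝ) < (M : ℝ) := by exact_mod_cast hM1
    have hdivpos : (0:ℝ) < (M : ℝ) / δ := by positivity
    have ht' : 2 / ε ^ 2 * Real.log ((M : ℝ) / δ) ≤ (t : ℝ) := by
      rw [hMcast]; exact ht
    have hlog : Real.log ((M : ℝ) / δ) ≤ (t : ℝ) * ε ^ 2 / 2 := by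
      have h := mul_le_mul_of_nonneg_right ht' (by positivity : (0:ℝ) ≤ ε ^ 2 / 2)
      have heq : 2 / ε ^ 2 * Real.log ((M : ℝ) / δ) * (ε ^ 2 / 2)
          = Real.log ((M : ℝ) / δ) := by field_simp
      rw [heq] at h
      linarith
    have h2 : (M : ℝ) / δ ≤ Real.exp ((t : ℝ) * ε ^ 2 / 2) :=
      (Real.log_le_iff_le_exp hdivpos).mp hlog
    have h3 : (M : ℝ) ≤ δ * Real.exp ((t : ℝ) * ε ^ 2 / 2) := by
      rw [div_le_iff₀ hδ0] at h2; linarith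
    have h4 : Real.exp (-((t : ℝ) * ε ^ 2) / 2) = (Real.exp ((t : ℝ) * ε ^ 2 / 2))⁻¹ := by
      rw [← Real.exp_neg]; ring_nf
    rw [h4]
    have hepos : (0:ℝ) < Real.exp ((t : ℝ) * ε ^ 2 / 2) := Real.exp_pos _
    rw [mul_inv_le_iff₀ hepos]
    linarith
  have ht0 : (0 : ℝ) < (t : ℝ) := by
    have hlt : (1:ℝ) < (M : ℝ) / δ := by
      have hM1' : (1:ℝ) ≤ (M:ℝ) := by exact_mod_cast hM1
      rw [lt_div_iff₀ hδ0]; nlinarith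
    have hlogpos : 0 < Real.log ((M : ℝ) / δ) := Real.log_pos hlt
    have : (0:ℝ) < (2 / ε ^ 2) * Real.log ((M : ℝ) / δ) := by positivity
    rw [hMcast] at this
    calc (0:ℝ) < _ := this
      _ ≤ (t : ℝ) := by
          convert ht using 3 <;> rw [hn]
  -- pair events
  set A : B × B → Set Ω := fun q =>
    {ω | ε ≤ p q.1 - p q.2} ∩ {ω | 0 ≤ ∑ i, (X i ω q.2 - X i ω q.1)} with hA
  have hAmeas : ∀ q, MeasurableSet (A q) := by
    intro q
    apply MeasurableSet.inter
    · by_cases h : ε ≤ p q.1 - p q.2 <;> simp [h]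
    · exact measurableSet_le measurable_const
        (Finset.measurable_sum _ fun i _ =>
          ((measurable_pi_apply q.2).comp (hmeas i)).sub
            ((measurable_pi_apply q.1).comp (hmeas i)))
  have intXv : ∀ i v, Integrable (fun ω => X i ω v) ℙ := by
    intro i v
    refine Integrable.mono' (integrable_const 1)
      ((measurable_pi_apply v).comp (hmeas i)).aestronglyMeasurable ?_
    filter_upwards [hrange i] with ω h
    rw [Real.norm_eq_abs]
    exact abs_le.mpr ⟨by linarith [(h v).1], (h v).2⟩
  have hAbound : ∀ q, ℙ (A q) ≤ ENNReal.ofReal (Real.exp (-((t : ℝ) * ε ^ 2) / 2)) := by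
    intro q
    by_cases hq : ε ≤ p q.1 - p q.2
    · have hsub : A q ⊆ {ω | 0 ≤ ∑ i, (X i ω q.2 - X i ω q.1)} := Set.inter_subset_right
      refine le_trans (measure_mono hsub) ?_
      set Y : Fin t → Ω → ℝ := fun i ω => X i ω q.2 - X i ω q.1 with hY
      have hYmeas : ∀ i, Measurable (Y i) := fun i =>
        ((measurable_pi_apply q.2).comp (hmeas i)).sub
          ((measurable_pi_apply q.1).comp (hmeas i))
      have hYind : iIndepFun Y ℙ :=
        hindep.comp (fun _ => fun f => f q.2 - f q.1)
          (fun _ => (measurable_pi_apply _).sub (measurable_pi_apply _))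
      have hYb : ∀ i, ∀ᵐ ω ∂ℙ, Y i ω ∈ Set.Icc (-1 : ℝ) 1 := by
        intro i
        filter_upwards [hrange i] with ω h
        have h1 := h q.1
        have h2 := h q.2
        exact ⟨by simp only [hY]; linarith [h1.2, h2.1], by simp only [hY]; linarith [h1.1, h2.2]⟩
      have hYmean : ∀ i, ∫ ω, Y i ω ∂ℙ ≤ -ε := by
        intro i
        have : ∫ ω, Y i ω ∂ℙ = p q.2 - p q.1 := by
          simp only [hY]
          rw [integral_sub (intXv i q.2) (intXv i q.1), hmean, hmean]
        rw [this]; linarith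
      have hh := auxHoeffding hYmeas hYind hYb hε0 hε1.le hYmean
      have hne : ℙ {ω | 0 ≤ ∑ i, Y i ω} ≠ ⊤ := measure_ne_top _ _
      calc ℙ {ω | 0 ≤ ∑ i, (X i ω q.2 - X i ω q.1)}
          = ENNReal.ofReal ((ℙ {ω | 0 ≤ ∑ i, Y i ω}).toReal) :=
            (ENNReal.ofReal_toReal hne).symm
        _ ≤ ENNReal.ofReal (Real.exp (-((t : ℝ) * ε ^ 2) / 2)) :=
            ENNReal.ofReal_le_ofReal hh
    · have hempty : A q = ∅ := by
        rw [hA]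
        ext ω
        simp [hq]
      simp [hempty]
  set U : Set Ω := ⋃ q ∈ (T ×ˢ Tᶜ : Finset (B × B)), A q with hU
  have hUmeas : MeasurableSet U :=
    (T ×ˢ Tᶜ : Finset (B × B)).measurableSet_biUnion fun q _ => hAmeas q
  have hScard : ((T ×ˢ Tᶜ : Finset (B × B)).card : ℝ) = (M : ℝ) := by
    have hc : (T ×ˢ Tᶜ : Finset (B × B)).card = M := by
      rw [Finset.card_product, Finset.card_compl, hTcard, hM, hn]
    exact_mod_cast congrArg (fun x : ℕ => (x : ℝ)) hc
  have hUb : ℙ U ≤ ENNReal.ofReal δ := by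
    calc ℙ U ≤ ∑ q ∈ (T ×ˢ Tᶜ : Finset (B × B)), ℙ (A q) :=
          measure_biUnion_finset_le _ _
      _ ≤ ∑ _q ∈ (T ×ˢ Tᶜ : Finset (B × B)),
            ENNReal.ofReal (Real.exp (-((t : ℝ) * ε ^ 2) / 2)) :=
          Finset.sum_le_sum fun q _ => hAbound q
      _ = ((T ×ˢ Tᶜ : Finset (B × B)).card : ENNReal) *
            ENNReal.ofReal (Real.exp (-((t : ℝ) * ε ^ 2) / 2)) := by
          rw [Finset.sum_const, nsmul_eq_mul]
      _ = ENNReal.ofReal (((T ×ˢ Tᶜ : Finset (B × B)).card : ℝ) *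
            Real.exp (-((t : ℝ) * ε ^ 2) / 2)) := by
          rw [ENNReal.ofReal_mul (by positivity), ENNReal.ofReal_natCast]
      _ ≤ ENNReal.ofReal δ := by
          apply ENNReal.ofReal_le_ofReal
          rw [hScard]
          exact hexpkey
  -- deterministic containment
  have hcontain : Uᶜ ⊆ {ω | ∀ R : Finset B, R.card = k - k' →
      (∀ u ∈ R, ∀ w ∉ R,
        (∑ i, X i ω w) / (t : ℝ) ≤ (∑ i, X i ω u) / (t : ℝ)) →
      (∀ v ∈ R, kthLargest p (k - k') - ε ≤ p v) ∧
      (∀ v ∉ R, p v < kthLargest p (k - k') + ε)} := by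
    intro ω hω
    rw [Set.mem_compl_iff, hU, Set.mem_iUnion₂] at hω
    push_neg at hω
    intro R hRcard hRtop
    have key : ∀ w ∈ T, ∀ u, u ∉ T → ε ≤ p w - p u →
        ∑ i, X i ω u < ∑ i, X i ω w := by
      intro w hw u hu hεle
      by_contra hcon
      push_neg at hcon
      refine hω (w, u) (Finset.mem_product.mpr ⟨hw, Finset.mem_compl.mpr hu⟩) ?_
      refine ⟨hεle, ?_⟩
      simp only [Set.mem_setOf_eq]
      rw [Finset.sum_sub_distrib]
      linarith
    have hRcard' : R.card = m := hRcard
    constructor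
    · intro v hv
      by_contra hc
      push_neg at hc
      have hvT : v ∉ T := fun h => absurd (hTge v h) (by
        change ¬ (Q ≤ p v); push_neg
        have : kthLargest p (k - k') = Q := rfl
        linarith [hc])
      have hTR : ¬ T ⊆ R := by
        intro hsub
        have : T = R := Finset.eq_of_subset_of_card_le hsub (by omega)
        rw [← this] at hv
        exact hvT hv
      obtain ⟨w, hwT, hwR⟩ := Finset.not_subset.mp hTR
      have hQw : Q ≤ p w := hTge w hwT
      have h1 : ∑ i, X i ω v < ∑ i, X i ω w := by
        refine key w hwT v hvT ?_
        have : kthLargest p (k - k') = Q := rfl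
        linarith [hc]
      have h2 := hRtop v hv w hwR
      rw [div_le_div_iff_of_pos_right ht0] at h2
      linarith
    · intro v hv
      by_contra hc
      push_neg at hc
      have hvT : v ∈ T := by
        by_contra h
        have := hTle v h
        have hQQ : kthLargest p (k - k') = Q := rfl
        rw [hQQ] at hc
        linarith
      have hRT : ¬ R ⊆ T := by
        intro hsub
        have : R = T := Finset.eq_of_subset_of_card_le hsub (by omega)
        rw [this] at hv
        exact hv hvT
      obtain ⟨u, huR, huT⟩ := Finset.not_subset.mp hRT
      have h1 : ∑ i, X i ω u < ∑ i, X i ω v := by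
        refine key v hvT u huT ?_
        have hQQ : kthLargest p (k - k') = Q := rfl
        rw [hQQ] at hc
        linarith [hTle u huT]
      have h2 := hRtop u huR v hv
      rw [div_le_div_iff_of_pos_right ht0] at h2
      linarith
  -- conclude
  have hfin : ℙ {ω | ∀ R : Finset B, R.card = k - k' →
      (∀ u ∈ R, ∀ w ∉ R,
        (∑ i, X i ω w) / (t : ℝ) ≤ (∑ i, X i ω u) / (t : ℝ)) →
      (∀ v ∈ R, kthLargest p (k - k') - ε ≤ p v) ∧
      (∀ v ∉ R, p v < kthLargest p (k - k') + ε)} ≠ ⊤ := measure_ne_top _ _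
  have hge : ENNReal.ofReal (1 - δ) ≤ ℙ {ω | ∀ R : Finset B, R.card = k - k' →
      (∀ u ∈ R, ∀ w ∉ R,
        (∑ i, X i ω w) / (t : ℝ) ≤ (∑ i, X i ω u) / (t : ℝ)) →
      (∀ v ∈ R, kthLargest p (k - k') - ε ≤ p v) ∧
      (∀ v ∉ R, p v < kthLargest p (k - k') + ε)} := by
    calc ENNReal.ofReal (1 - δ) = ENNReal.ofReal 1 - ENNReal.ofReal δ :=
          ENNReal.ofReal_sub 1 hδ0.le
      _ = 1 - ENNReal.ofReal δ := by rw [ENNReal.ofReal_one]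
      _ ≤ 1 - ℙ U := by
          exact tsub_le_tsub_left hUb 1
      _ = ℙ Uᶜ := (prob_compl_eq_one_sub hUmeas).symm
      _ ≤ _ := measure_mono hcontain
  have := ENNReal.toReal_mono hfin hge
  rw [ENNReal.toReal_ofReal (by linarith)] at this
  exact this
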